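/- Let K be a field with char K = 2 and let a, a' ∈ K*. Then the algebras S(0, a, a, 0, a, 0) and S(0, a', a', 0, a', 0) are isomorphic if and only if there exist x ∈ K* and y ∈ K with a'x² + y² + a = 0. -/

import Mathlib

/-- Multiplication of the 2-dimensional algebra `S(p,q,a,b,c,d)` on `K × K`,
with basis `e = (1,0)`, `f = (0,1)` and table
`e*e = f`, `f*f = p•e + q•f`, `e*f = a•e + b•f`, `f*e = c•e + d•f`. -/
def mulS {K : Type*} [Field K] (p q a b c d : K) (u v : K × K) : K × K :=
  (u.1 * v.2 * a + u.2 * v.1 * c + u.2 * v.2 * p,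
   u.1 * v.1 + u.1 * v.2 * b + u.2 * v.1 * d + u.2 * v.2 * q)

/-- `S(p,q,a,b,c,d)` is endo-commutative: `(x*x)*(y*y) = (x*y)*(x*y)`. -/
def EndoComm {K : Type*} [Field K] (p q a b c d : K) : Prop :=
  ∀ u v : K × K,
    mulS p q a b c d (mulS p q a b c d u u) (mulS p q a b c d v v) =
      mulS p q a b c d (mulS p q a b c d u v) (mulS p q a b c d u v)

/-- `S(p,q,a,b,c,d)` and `S(p',q',a',b',c',d')` are isomorphic: there is a bijective
`K`-linear map between them preserving multiplication. -/
def IsoS {K : Type*} [Field K] (p q a b c d p' q' a' b' c' d' : K) : Prop :=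
  ∃ φ : (K × K) ≃ₗ[K] (K × K),
    ∀ u v : K × K,
      φ (mulS p q a b c d u v) = mulS p' q' a' b' c' d' (φ u) (φ v)

theorem iso_II1_12_char_two_iff {K : Type*} [Field K] [CharP K 2]
    (a a' : K) (ha : a ≠ 0) (ha' : a' ≠ 0) :
    IsoS 0 a a 0 a 0 0 a' a' 0 a' 0 ↔
      ∃ x : K, x ≠ 0 ∧ ∃ y : K, a' * x ^ 2 + y ^ 2 + a = 0 := by
  have h2 : (2 : K) = 0 := by
    have := CharP.cast_eq_zero K 2; push_cast at this; exact this
  constructor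
  · rintro ⟨φ, hφ⟩
    obtain ⟨A, hA⟩ : ∃ A, φ (1, 0) = A := ⟨_, rfl⟩
    obtain ⟨B, hB⟩ : ∃ B, φ (0, 1) = B := ⟨_, rfl⟩
    have hee : B = mulS 0 a' a' 0 a' 0 A A := by
      have := hφ (1, 0) (1, 0)
      simpa [mulS, hA, hB] using this
    have hef : a • A = mulS 0 a' a' 0 a' 0 A B := by
      have h := hφ (1, 0) (0, 1)
      have hL : mulS 0 a a 0 a 0 ((1:K), (0:K)) (0, 1) = a • ((1:K), (0:K)) := by
        simp [mulS, Prod.ext_iff]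
      rw [hL, map_smul] at h
      rw [hA, hB] at h
      exact h
    have hB1 : B.1 = 0 := by
      have := congrArg Prod.fst hee
      simp only [mulS] at this
      rw [this]; linear_combination A.1 * A.2 * a' * h2
    have hB2 : B.2 = A.1 * A.1 + A.2 * A.2 * a' := by
      have := congrArg Prod.snd hee
      simpa [mulS] using this
    have hBne : B.2 ≠ 0 := by
      intro h0
      have hBz : B = 0 := by rw [Prod.ext_iff]; exact ⟨hB1, h0⟩
      have : ((0:K), (1:K)) = 0 := φ.injective (by rw [hB, hBz, map_zero])
      simp [Prod.ext_iff] at this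
    have hA1 : A.1 ≠ 0 := by
      intro h0
      have hz : φ ((1, 0) - (A.2 / B.2) • ((0:K), (1:K))) = 0 := by
        rw [map_sub, map_smul, hA, hB, Prod.ext_iff]
        constructor
        · simp [h0, hB1]
        · simp; field_simp; ring
      have h3 : ((1:K), (0:K)) - (A.2 / B.2) • ((0:K), (1:K)) = 0 :=
        φ.injective (by rw [hz, map_zero])
      rw [Prod.ext_iff] at h3
      simpa using h3.1
    have key : a = a' * B.2 := by
      have := congrArg Prod.fst hef
      simp only [mulS, Prod.smul_fst, smul_eq_mul, hB1] at this
      field_simp at this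
      have h' : A.1 * (a - a' * B.2) = 0 := by linear_combination this
      rcases mul_eq_zero.1 h' with h | h
      · exact absurd h hA1
      · linear_combination h
    refine ⟨A.1, hA1, a' * A.2, ?_⟩
    have hth : a = a' * (A.1 * A.1 + A.2 * A.2 * a') := by rw [← hB2]; exact key
    linear_combination a * h2 - hth
  · rintro ⟨x, hx, y, hxy⟩
    have hrel : a = a' * x ^ 2 + y ^ 2 := by
      linear_combination hxy - (a' * x ^ 2 + y ^ 2) * h2
    obtain ⟨β, hy⟩ : ∃ β, a' * β = y := ⟨y / a', by field_simp⟩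
    obtain ⟨δ, hδ⟩ : ∃ δ, a' * δ = a := ⟨a / a', by field_simp⟩
    have hδne : δ ≠ 0 := by
      intro h0; rw [h0, mul_zero] at hδ; exact ha hδ.symm
    have hδ2 : δ = x ^ 2 + a' * β ^ 2 := by
      apply mul_left_cancel₀ ha'
      linear_combination hδ + hrel - (y + a' * β) * hy
    refine ⟨{ toFun := fun u => (x * u.1, β * u.1 + δ * u.2),
              invFun := fun v => (v.1 / x, (v.2 - β * (v.1 / x)) / δ),
              map_add' := by
                intro u v; simp only [Prod.ext_iff, Prod.fst_add, Prod.snd_add]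
                constructor <;> ring
              map_smul' := by
                intro c u
                simp only [Prod.ext_iff, Prod.smul_fst, Prod.smul_snd, smul_eq_mul,
                  RingHom.id_apply]
                constructor <;> ring
              left_inv := by
                intro u; simp only [Prod.ext_iff]
                constructor
                · field_simp
                · field_simp; try ring
              right_inv := by
                intro v; simp only [Prod.ext_iff]
                constructor
                · field_simp
                · field_simp; try ring }, ?_⟩
    intro u v
    simp only [mulS, LinearEquiv.coe_mk, LinearMap.coe_mk, AddHom.coe_mk, Equiv.coe_fn_mk,
      Prod.ext_iff]
    constructor
    · linear_combination -(x * (u.1 * v.2 + u.2 * v.1)) * hδ - a' * x * β * u.1 * v.1 * h2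
    · linear_combination u.1 * v.1 * hδ2 - (β * (u.1 * v.2 + u.2 * v.1) + δ * u.2 * v.2) * hδ
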